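/- arXiv:2003.06281 — 3 statements merged into one kernel-verified Lean document; each statement's English description precedes it below -/
import Mathlib

section
/- Suppose the expected Kullback–Leibler divergence between the true posterior kernel and the model-induced posterior vanishes, i.e. ∫_X KL(P(x) ‖ Q(x)) dμ(x) = 0, where Q is the Markov kernel given by Q(x) = (e_x⁻¹)_*γ (the pushforward of the standard Gaussian γ under the inverse of the conditional invertible map e_x). Then for μ-almost every x: (i) the latent distribution (e_x)_*(P(x)) equals γ (so it is statistically independent of the conditioning data x), and (ii) the pushforward (e_x⁻¹)_*γ equals the true posterior P(x); that is, sampling z ∼ γ and applying the inverse map e_x⁻¹ produces samples from the true posterior. -/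
open MeasureTheory ProbabilityTheory
open scoped ENNReal NNReal Classical

lemma gibbs_eq {α : Type*} [MeasurableSpace α] (ρ ν : Measure α)
    [IsProbabilityMeasure ρ] [IsProbabilityMeasure ν]
    (hac : ρ ≪ ν) (hint : Integrable (llr ρ ν) ρ)
    (hI : ∫ a, llr ρ ν a ∂ρ ≤ 0) : ρ = ν := by
  set g : α → ℝ := fun a => (ν.rnDeriv ρ a).toReal with hg
  have hgmeas : Measurable g := (Measure.measurable_rnDeriv ν ρ).ennreal_toReal
  have hgint : Integrable g ρ := Measure.integrable_toReal_rnDeriv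
  -- g is positive a.e. ρ
  have hgpos : ∀ᵐ a ∂ρ, 0 < g a := by
    filter_upwards [Measure.inv_rnDeriv hac, Measure.rnDeriv_pos hac,
      hac.ae_le (Measure.rnDeriv_lt_top ρ ν)] with a hinv hpos hlt
    rw [hg]
    simp only [← hinv, Pi.inv_apply]
    rw [ENNReal.toReal_inv]
    exact inv_pos.mpr (ENNReal.toReal_pos hpos.ne' hlt.ne)
  -- log g = llr ν ρ and equals - llr ρ ν a.e.
  have hlogg : (fun a => Real.log (g a)) =ᵐ[ρ] fun a => - llr ρ ν a := by
    filter_upwards [MeasureTheory.neg_llr hac] with a ha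
    rw [show Real.log (g a) = llr ν ρ a from rfl, ← ha]; rfl
  have hloggint : Integrable (fun a => Real.log (g a)) ρ := hint.neg.congr hlogg.symm
  have hintlog : 0 ≤ ∫ a, Real.log (g a) ∂ρ := by
    rw [integral_congr_ae hlogg, integral_neg]
    linarith
  have hintg : ∫ a, g a ∂ρ ≤ 1 := by
    rw [hg, Measure.integral_toReal_rnDeriv']
    have h1 : ν.real Set.univ = 1 := by simp
    have h2 : (0:ℝ) ≤ (ν.singularPart ρ).real Set.univ := ENNReal.toReal_nonneg
    linarith
  -- h := g - 1 - log g is nonneg a.e., with nonpositive integral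
  set h : α → ℝ := fun a => g a - 1 - Real.log (g a) with hh
  have hhint : Integrable h ρ := (hgint.sub (integrable_const 1)).sub hloggint
  have hhnn : 0 ≤ᵐ[ρ] h := by
    filter_upwards [hgpos] with a ha
    have := Real.log_le_sub_one_of_pos ha
    simp only [hh, Pi.zero_apply]; linarith
  have hhle : ∫ a, h a ∂ρ ≤ 0 := by
    rw [hh]
    have e1 : Integrable (fun a => g a - 1) ρ := hgint.sub (integrable_const 1)
    have : ∫ a, (g a - 1 - Real.log (g a)) ∂ρ
        = (∫ a, g a ∂ρ) - 1 - ∫ a, Real.log (g a) ∂ρ := by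
      rw [integral_sub e1 hloggint, integral_sub hgint (integrable_const 1)]
      simp
    rw [this]; linarith
  have hh0 : h =ᵐ[ρ] 0 := by
    have := (integral_eq_zero_iff_of_nonneg_ae hhnn hhint).mp
      (le_antisymm hhle (integral_nonneg_of_ae hhnn))
    exact this
  -- hence g = 1 a.e. ρ
  have hg1 : ∀ᵐ a ∂ρ, g a = 1 := by
    filter_upwards [hh0, hgpos] with a ha hpos
    by_contra hne
    have := Real.log_lt_sub_one_of_pos hpos hne
    have ha' : g a - 1 - Real.log (g a) = 0 := ha
    linarith
  -- so ρ.rnDeriv ν = 1 a.e. ρ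
  have hf1 : ∀ᵐ a ∂ρ, ρ.rnDeriv ν a = 1 := by
    filter_upwards [hg1, Measure.inv_rnDeriv hac, Measure.rnDeriv_pos hac,
      hac.ae_le (Measure.rnDeriv_lt_top ρ ν)] with a ha hinv hpos hlt
    have hfin : ν.rnDeriv ρ a ≠ ⊤ := by
      rw [← hinv, Pi.inv_apply]
      simp [ENNReal.inv_eq_top, hpos.ne']
    have h1 : ν.rnDeriv ρ a = 1 := by
      have := (ENNReal.toReal_eq_one_iff _).mp ha
      exact this
    have : (ρ.rnDeriv ν a)⁻¹ = 1 := by rw [← Pi.inv_apply, hinv]; exact h1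
    rwa [ENNReal.inv_eq_one] at this
  -- transfer to a.e. ν using the set {rnDeriv = 1}
  set A : Set α := {a | ρ.rnDeriv ν a = 1} with hA
  have hAmeas : MeasurableSet A := Measure.measurable_rnDeriv ρ ν (measurableSet_singleton 1)
  have hρAc : ρ Aᶜ = 0 := by
    have h := ae_iff.mp hf1
    simpa [hA, Set.compl_def] using h
  have hρwd : ν.withDensity (ρ.rnDeriv ν) = ρ := Measure.withDensity_rnDeriv_eq ρ ν hac
  have hνA : ν A = 1 := by
    have h1 : ρ A = 1 := (prob_compl_eq_zero_iff hAmeas).mp hρAc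
    have h2 : ρ A = ν A := by
      rw [← hρwd, withDensity_apply _ hAmeas]
      rw [setLIntegral_congr_fun hAmeas (show Set.EqOn (ρ.rnDeriv ν) (fun _ => 1) A from fun a ha => ha)]
      simp
    rw [← h2, h1]
  have hνAc : ν Aᶜ = 0 := (prob_compl_eq_zero_iff hAmeas).mpr hνA
  have hf1ν : ρ.rnDeriv ν =ᵐ[ν] 1 := by
    rw [Filter.EventuallyEq, ae_iff]
    refine measure_mono_null ?_ hνAc
    intro a ha
    exact ha
  calc ρ = ν.withDensity (ρ.rnDeriv ν) := hρwd.symm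
    _ = ν.withDensity 1 := withDensity_congr_ae hf1ν
    _ = ν := by simp

/-- The Kullback–Leibler divergence `∫ log (dρ/dν) dρ`, defined to be `+∞` when `ρ` is not
absolutely continuous with respect to `ν` (or when the log-density is not integrable). -/
noncomputable def klDiv {α : Type*} [MeasurableSpace α] (ρ ν : Measure α) : ℝ≥0∞ :=
  if ρ ≪ ν ∧ Integrable (fun a => Real.log (ρ.rnDeriv ν a).toReal) ρ then
    ENNReal.ofReal (∫ a, Real.log (ρ.rnDeriv ν a).toReal ∂ρ)
  else ⊤

lemma klDiv_eq_zero_imp {α : Type*} [MeasurableSpace α] {ρ ν : Measure α}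
    [IsProbabilityMeasure ρ] [IsProbabilityMeasure ν] (h : klDiv ρ ν = 0) : ρ = ν := by
  by_cases hc : ρ ≪ ν ∧ Integrable (fun a => Real.log (ρ.rnDeriv ν a).toReal) ρ
  · rw [klDiv, if_pos hc] at h
    exact gibbs_eq ρ ν hc.1 hc.2 (ENNReal.ofReal_eq_zero.mp h)
  · rw [klDiv, if_neg hc] at h
    exact absurd h (by simp)

/-- **Proposition 1 of BayesFlow.** If the expected KL divergence between the true posterior
kernel `P` and the model-induced posterior `Q x = (e x)⁻¹_* γ` vanishes, then for `μ`-almost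
every `x` the latent distribution `(e x)_* (P x)` equals the standard Gaussian `γ`
(independence of the conditioning data) and the pushforward `(e x)⁻¹_* γ` equals the true
posterior `P x`. -/
theorem bayesflow_correct_posterior_sampling
    {X : Type*} [MeasurableSpace X] (μ : Measure X) [IsProbabilityMeasure μ]
    (D : ℕ) (hD : 0 < D)
    (γ : Measure (Fin D → ℝ))
    (hγ : γ = Measure.pi fun _ => gaussianReal 0 1)
    (P : Kernel X (Fin D → ℝ)) [IsMarkovKernel P]
    (e : X → (Fin D → ℝ) ≃ᵐ (Fin D → ℝ))
    (Q : Kernel X (Fin D → ℝ)) [IsMarkovKernel Q]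
    (hQ : ∀ x, Q x = γ.map (e x).symm)
    (hKL : ∫⁻ x, klDiv (P x) (Q x) ∂μ = 0) :
    ∀ᵐ x ∂μ, (P x).map (e x) = γ ∧ γ.map (e x).symm = P x := by
  -- the log-density of the kernel Radon–Nikodym derivative
  set L : X → (Fin D → ℝ) → ℝ := fun x y => Real.log ((P.rnDeriv Q x y).toReal) with hL
  have hLmeas : Measurable (Function.uncurry L) :=
    (Kernel.measurable_rnDeriv P Q).ennreal_toReal.log
  have hg1meas : Measurable (fun x => ∫⁻ y, (‖L x y‖₊ : ℝ≥0∞) ∂(P x)) :=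
    Measurable.lintegral_kernel_prod_right (f := fun x y => (‖L x y‖₊ : ℝ≥0∞))
      hLmeas.nnnorm.coe_nnreal_ennreal
  have hg2meas : Measurable (fun x => ∫ y, L x y ∂(P x)) := by
    have : StronglyMeasurable (fun p : X × (Fin D → ℝ) => L p.1 p.2) :=
      hLmeas.stronglyMeasurable
    exact this.integral_kernel_prod_right'.measurable
  set S : Set X := {x | P x ≪ Q x} ∩ {x | ∫⁻ y, (‖L x y‖₊ : ℝ≥0∞) ∂(P x) ≠ ⊤} with hS
  have hSmeas : MeasurableSet S :=
    (Kernel.measurableSet_absolutelyContinuous P Q).inter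
      ((hg1meas (measurableSet_singleton ⊤)).compl)
  set F : X → ℝ≥0∞ := fun x =>
    if x ∈ S then ENNReal.ofReal (∫ y, L x y ∂(P x)) else ⊤ with hF
  have hFmeas : Measurable F :=
    Measurable.ite hSmeas (ENNReal.measurable_ofReal.comp hg2meas) measurable_const
  -- F coincides with the pointwise KL divergence
  have hFeq : ∀ x, F x = klDiv (P x) (Q x) := by
    intro x
    by_cases hac : P x ≪ Q x
    · have hae : (fun y => L x y) =ᵐ[P x] llr (P x) (Q x) := by
        filter_upwards [hac.ae_le (P.rnDeriv_eq_rnDeriv_measure (η := Q) (a := x))] with y hy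
        rw [hL]; simp only []
        rw [hy]; rfl
      have h1 : ∫⁻ y, (‖L x y‖₊ : ℝ≥0∞) ∂(P x)
          = ∫⁻ y, (‖llr (P x) (Q x) y‖₊ : ℝ≥0∞) ∂(P x) := by
        refine lintegral_congr_ae ?_
        filter_upwards [hae] with y hy
        rw [hy]
      have h2 : Integrable (llr (P x) (Q x)) (P x) ↔
          ∫⁻ y, (‖L x y‖₊ : ℝ≥0∞) ∂(P x) ≠ ⊤ := by
        rw [h1]
        constructor
        · intro hint
          exact hint.2.ne
        · intro hfin
          exact ⟨(measurable_llr _ _).aestronglyMeasurable, lt_top_iff_ne_top.mpr hfin⟩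
      have h3 : ∫ y, L x y ∂(P x) = ∫ y, llr (P x) (Q x) y ∂(P x) := integral_congr_ae hae
      have hklr : klDiv (P x) (Q x)
          = if P x ≪ Q x ∧ Integrable (llr (P x) (Q x)) (P x) then
              ENNReal.ofReal (∫ y, llr (P x) (Q x) y ∂(P x)) else ⊤ := rfl
      by_cases hint : Integrable (llr (P x) (Q x)) (P x)
      · have hxS : x ∈ S := ⟨hac, h2.mp hint⟩
        rw [hF]; simp only [if_pos hxS]
        rw [hklr, if_pos ⟨hac, hint⟩, h3]
      · have hxS : x ∉ S := by
          intro hmem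
          exact hint (h2.mpr hmem.2)
        rw [hF]; simp only [if_neg hxS]
        rw [hklr, if_neg (fun hc => hint hc.2)]
    · have hxS : x ∉ S := fun hmem => hac hmem.1
      have : klDiv (P x) (Q x) = ⊤ := by
        rw [klDiv, if_neg (fun hc => hac hc.1)]
      rw [hF]; simp only [if_neg hxS]
      rw [this]
  have hF0 : F =ᵐ[μ] 0 :=
    (lintegral_eq_zero_iff hFmeas).mp (by rw [lintegral_congr hFeq]; exact hKL)
  filter_upwards [hF0] with x hx
  have hkl0 : klDiv (P x) (Q x) = 0 := by rw [← hFeq x]; exact hx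
  have hPQ : P x = Q x := klDiv_eq_zero_imp hkl0
  refine ⟨?_, by rw [← hQ x, hPQ]⟩
  rw [hPQ, hQ x, Measure.map_map (e x).measurable (e x).symm.measurable]
  simp [MeasurableEquiv.self_comp_symm]
end

section
/- The Jacobian determinant of an affine coupling block has the closed form given by the scaling networks: let s₁, t₁ : ℝ^m → ℝ^k and s₂, t₂ : ℝ^k → ℝ^m be differentiable, and let F : ℝ^k × ℝ^m → ℝ^k × ℝ^m be defined by F(u₁, u₂) = (v₁, v₂) with v₁ = u₁ ⊙ exp(s₁(u₂)) + t₁(u₂) and v₂ = u₂ ⊙ exp(s₂(v₁)) + t₂(v₁). Then F is differentiable at every point u = (u₁, u₂), and the determinant of its derivative equals det DF(u) = exp(∑_{i=1}^{k} s₁(u₂)_i) · exp(∑_{j=1}^{m} s₂(v₁)_j); in particular det DF(u) > 0 everywhere, so the Jacobian determinant never vanishes. -/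
open scoped BigOperators

/-- The forward pass of an affine coupling block:
`v₁ = u₁ ⊙ exp (s₁ u₂) + t₁ u₂` and `v₂ = u₂ ⊙ exp (s₂ v₁) + t₂ v₁` (componentwise). -/
noncomputable def couplingForward {k m : ℕ}
    (s₁ t₁ : (Fin m → ℝ) → (Fin k → ℝ)) (s₂ t₂ : (Fin k → ℝ) → (Fin m → ℝ)) :
    (Fin k → ℝ) × (Fin m → ℝ) → (Fin k → ℝ) × (Fin m → ℝ) := fun u =>
  let v₁ : Fin k → ℝ := fun i => u.1 i * Real.exp (s₁ u.2 i) + t₁ u.2 i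
  let v₂ : Fin m → ℝ := fun j => u.2 j * Real.exp (s₂ v₁ j) + t₂ v₁ j
  (v₁, v₂)

section AuxCoupling
open ContinuousLinearMap

lemma det_block_upper {k m : ℕ} (A : (Fin k → ℝ) →L[ℝ] (Fin k → ℝ))
    (B : (Fin m → ℝ) →L[ℝ] (Fin k → ℝ)) :
    ((A.comp (fst ℝ (Fin k → ℝ) (Fin m → ℝ)) + B.comp (snd ℝ (Fin k → ℝ) (Fin m → ℝ))).prod
      (snd ℝ (Fin k → ℝ) (Fin m → ℝ))).det = A.det := by
  classical
  set bk := Pi.basisFun ℝ (Fin k)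
  set bm := Pi.basisFun ℝ (Fin m)
  set b := bk.prod bm
  set L := ((A.comp (fst ℝ (Fin k → ℝ) (Fin m → ℝ)) + B.comp (snd ℝ (Fin k → ℝ) (Fin m → ℝ))).prod
      (snd ℝ (Fin k → ℝ) (Fin m → ℝ))).toLinearMap with hL
  show LinearMap.det L = A.det
  rw [← LinearMap.det_toMatrix b]
  have h : LinearMap.toMatrix b b L = Matrix.fromBlocks (LinearMap.toMatrix bk bk A.toLinearMap)
      (LinearMap.toMatrix bm bk B.toLinearMap) 0 1 := by
    ext (i|i) (j|j) <;>
      simp [LinearMap.toMatrix_apply, hL, b, bk, bm, Module.Basis.prod_apply, Matrix.fromBlocks,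
        Pi.basisFun_apply, Pi.basisFun_repr, Matrix.one_apply, Pi.single_apply]
  rw [h, Matrix.det_fromBlocks_zero₂₁, Matrix.det_one, mul_one, LinearMap.det_toMatrix]

lemma det_block_lower {k m : ℕ} (C : (Fin k → ℝ) →L[ℝ] (Fin m → ℝ))
    (D : (Fin m → ℝ) →L[ℝ] (Fin m → ℝ)) :
    ((fst ℝ (Fin k → ℝ) (Fin m → ℝ)).prod
      (C.comp (fst ℝ (Fin k → ℝ) (Fin m → ℝ)) + D.comp (snd ℝ (Fin k → ℝ) (Fin m → ℝ)))).det
      = D.det := by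
  classical
  set bk := Pi.basisFun ℝ (Fin k)
  set bm := Pi.basisFun ℝ (Fin m)
  set b := bk.prod bm
  set L := ((fst ℝ (Fin k → ℝ) (Fin m → ℝ)).prod
      (C.comp (fst ℝ (Fin k → ℝ) (Fin m → ℝ)) + D.comp (snd ℝ (Fin k → ℝ) (Fin m → ℝ)))).toLinearMap
    with hL
  show LinearMap.det L = D.det
  rw [← LinearMap.det_toMatrix b]
  have h : LinearMap.toMatrix b b L = Matrix.fromBlocks 1 0
      (LinearMap.toMatrix bk bm C.toLinearMap) (LinearMap.toMatrix bm bm D.toLinearMap) := by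
    ext (i|i) (j|j) <;>
      simp [LinearMap.toMatrix_apply, hL, b, bk, bm, Module.Basis.prod_apply, Matrix.fromBlocks,
        Pi.basisFun_apply, Pi.basisFun_repr, Matrix.one_apply, Pi.single_apply]
  rw [h, Matrix.det_fromBlocks_zero₁₂, Matrix.det_one, one_mul, LinearMap.det_toMatrix]

lemma det_diag {n : ℕ} (e : Fin n → ℝ) :
    (ContinuousLinearMap.pi (fun i => e i • ContinuousLinearMap.proj (R := ℝ)
      (φ := fun _ : Fin n => ℝ) i)).det = ∏ i, e i := by
  classical
  set bn := Pi.basisFun ℝ (Fin n)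
  set L := (ContinuousLinearMap.pi (fun i => e i • ContinuousLinearMap.proj (R := ℝ)
      (φ := fun _ : Fin n => ℝ) i)).toLinearMap with hL
  show LinearMap.det L = ∏ i, e i
  rw [← LinearMap.det_toMatrix bn]
  have h : LinearMap.toMatrix bn bn L = Matrix.diagonal e := by
    ext i j
    simp [LinearMap.toMatrix_apply, hL, bn, Pi.basisFun_apply, Pi.basisFun_repr,
      Matrix.diagonal, Pi.single_apply, mul_ite]
  rw [h, Matrix.det_diagonal]

noncomputable def diagCLM {n : ℕ} (e : Fin n → ℝ) : (Fin n → ℝ) →L[ℝ] (Fin n → ℝ) :=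
  ContinuousLinearMap.pi (fun i => e i • ContinuousLinearMap.proj (R := ℝ)
    (φ := fun _ : Fin n => ℝ) i)

noncomputable def offCLM {n p : ℕ} (a e : Fin n → ℝ) (Ds Dt : (Fin p → ℝ) →L[ℝ] (Fin n → ℝ)) :
    (Fin p → ℝ) →L[ℝ] (Fin n → ℝ) :=
  ContinuousLinearMap.pi (fun i => (a i * e i) •
    ((ContinuousLinearMap.proj (R := ℝ) (φ := fun _ : Fin n => ℝ) i).comp Ds)
    + (ContinuousLinearMap.proj (R := ℝ) (φ := fun _ : Fin n => ℝ) i).comp Dt)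

lemma hasFDerivAt_v1 {k m : ℕ} (s₁ t₁ : (Fin m → ℝ) → (Fin k → ℝ))
    (hs₁ : Differentiable ℝ s₁) (ht₁ : Differentiable ℝ t₁) (u : (Fin k → ℝ) × (Fin m → ℝ)) :
    HasFDerivAt (fun u : (Fin k → ℝ) × (Fin m → ℝ) =>
      (fun i => u.1 i * Real.exp (s₁ u.2 i) + t₁ u.2 i : Fin k → ℝ))
      ((diagCLM (fun i => Real.exp (s₁ u.2 i))).comp (fst ℝ (Fin k → ℝ) (Fin m → ℝ))
        + (offCLM u.1 (fun i => Real.exp (s₁ u.2 i)) (fderiv ℝ s₁ u.2) (fderiv ℝ t₁ u.2)).comp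
            (snd ℝ (Fin k → ℝ) (Fin m → ℝ))) u := by
  rw [hasFDerivAt_pi']
  intro i
  have h1 : HasFDerivAt (fun u : (Fin k → ℝ) × (Fin m → ℝ) => u.1 i)
      ((ContinuousLinearMap.proj i).comp (fst ℝ (Fin k → ℝ) (Fin m → ℝ))) u :=
    ((ContinuousLinearMap.proj (R := ℝ) (φ := fun _ : Fin k => ℝ) i).comp
      (fst ℝ (Fin k → ℝ) (Fin m → ℝ))).hasFDerivAt
  have hs : HasFDerivAt (fun u : (Fin k → ℝ) × (Fin m → ℝ) => s₁ u.2)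
      ((fderiv ℝ s₁ u.2).comp (snd ℝ (Fin k → ℝ) (Fin m → ℝ))) u :=
    ((hs₁ u.2).hasFDerivAt).comp u hasFDerivAt_snd
  have h2 : HasFDerivAt (fun u : (Fin k → ℝ) × (Fin m → ℝ) => s₁ u.2 i)
      ((ContinuousLinearMap.proj i).comp ((fderiv ℝ s₁ u.2).comp
        (snd ℝ (Fin k → ℝ) (Fin m → ℝ)))) u :=
    ((ContinuousLinearMap.proj (R := ℝ) (φ := fun _ : Fin k => ℝ) i).hasFDerivAt).comp u hs
  have hexp := h2.exp
  have hmul := h1.mul hexp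
  have htc : HasFDerivAt (fun u : (Fin k → ℝ) × (Fin m → ℝ) => t₁ u.2 i)
      ((ContinuousLinearMap.proj i).comp ((fderiv ℝ t₁ u.2).comp
        (snd ℝ (Fin k → ℝ) (Fin m → ℝ)))) u :=
    ((ContinuousLinearMap.proj (R := ℝ) (φ := fun _ : Fin k => ℝ) i).hasFDerivAt).comp u
      (((ht₁ u.2).hasFDerivAt).comp u hasFDerivAt_snd)
  have htot := hmul.add htc
  refine htot.congr_fderiv ?_
  ext w <;>
    simp [diagCLM, offCLM, ContinuousLinearMap.pi_apply, ContinuousLinearMap.comp_apply,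
      ContinuousLinearMap.add_apply, ContinuousLinearMap.smul_apply,
      ContinuousLinearMap.proj_apply] <;>
    ring

lemma hasFDerivAt_v2 {k m : ℕ} (s₂ t₂ : (Fin k → ℝ) → (Fin m → ℝ))
    (hs₂ : Differentiable ℝ s₂) (ht₂ : Differentiable ℝ t₂) (p : (Fin k → ℝ) × (Fin m → ℝ)) :
    HasFDerivAt (fun p : (Fin k → ℝ) × (Fin m → ℝ) =>
      (fun j => p.2 j * Real.exp (s₂ p.1 j) + t₂ p.1 j : Fin m → ℝ))
      ((offCLM p.2 (fun j => Real.exp (s₂ p.1 j)) (fderiv ℝ s₂ p.1) (fderiv ℝ t₂ p.1)).comp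
          (fst ℝ (Fin k → ℝ) (Fin m → ℝ))
        + (diagCLM (fun j => Real.exp (s₂ p.1 j))).comp (snd ℝ (Fin k → ℝ) (Fin m → ℝ))) p := by
  rw [hasFDerivAt_pi']
  intro j
  have h1 : HasFDerivAt (fun p : (Fin k → ℝ) × (Fin m → ℝ) => p.2 j)
      ((ContinuousLinearMap.proj j).comp (snd ℝ (Fin k → ℝ) (Fin m → ℝ))) p :=
    ((ContinuousLinearMap.proj (R := ℝ) (φ := fun _ : Fin m => ℝ) j).comp
      (snd ℝ (Fin k → ℝ) (Fin m → ℝ))).hasFDerivAt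
  have hs : HasFDerivAt (fun p : (Fin k → ℝ) × (Fin m → ℝ) => s₂ p.1)
      ((fderiv ℝ s₂ p.1).comp (fst ℝ (Fin k → ℝ) (Fin m → ℝ))) p :=
    ((hs₂ p.1).hasFDerivAt).comp p hasFDerivAt_fst
  have h2 : HasFDerivAt (fun p : (Fin k → ℝ) × (Fin m → ℝ) => s₂ p.1 j)
      ((ContinuousLinearMap.proj j).comp ((fderiv ℝ s₂ p.1).comp
        (fst ℝ (Fin k → ℝ) (Fin m → ℝ)))) p :=
    ((ContinuousLinearMap.proj (R := ℝ) (φ := fun _ : Fin m => ℝ) j).hasFDerivAt).comp p hs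
  have hexp := h2.exp
  have hmul := h1.mul hexp
  have htc : HasFDerivAt (fun p : (Fin k → ℝ) × (Fin m → ℝ) => t₂ p.1 j)
      ((ContinuousLinearMap.proj j).comp ((fderiv ℝ t₂ p.1).comp
        (fst ℝ (Fin k → ℝ) (Fin m → ℝ)))) p :=
    ((ContinuousLinearMap.proj (R := ℝ) (φ := fun _ : Fin m => ℝ) j).hasFDerivAt).comp p
      (((ht₂ p.1).hasFDerivAt).comp p hasFDerivAt_fst)
  have htot := hmul.add htc
  refine htot.congr_fderiv ?_
  ext w <;>
    simp [diagCLM, offCLM, ContinuousLinearMap.pi_apply, ContinuousLinearMap.comp_apply,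
      ContinuousLinearMap.add_apply, ContinuousLinearMap.smul_apply,
      ContinuousLinearMap.proj_apply] <;>
    ring

lemma det_diagCLM_exp {n : ℕ} (x : Fin n → ℝ) :
    (diagCLM (fun i => Real.exp (x i))).det = Real.exp (∑ i, x i) := by
  rw [diagCLM, det_diag, Real.exp_sum]


end AuxCoupling

open ContinuousLinearMap in
/-- The Jacobian determinant of an affine coupling block has the closed form given by the
scaling networks: if `s₁, t₁, s₂, t₂` are differentiable, then the coupling block `F` is
differentiable at every point `u`, and
`det DF(u) = exp (∑ i, s₁ u₂ i) * exp (∑ j, s₂ v₁ j)` where `v₁` is the first output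
component of `F u`; in particular the Jacobian determinant is everywhere positive. -/
theorem coupling_block_jacobian_det {k m : ℕ} (hk : 0 < k) (hm : 0 < m)
    (s₁ t₁ : (Fin m → ℝ) → (Fin k → ℝ)) (s₂ t₂ : (Fin k → ℝ) → (Fin m → ℝ))
    (hs₁ : Differentiable ℝ s₁) (ht₁ : Differentiable ℝ t₁)
    (hs₂ : Differentiable ℝ s₂) (ht₂ : Differentiable ℝ t₂)
    (u : (Fin k → ℝ) × (Fin m → ℝ)) :
    DifferentiableAt ℝ (couplingForward s₁ t₁ s₂ t₂) u ∧
    (fderiv ℝ (couplingForward s₁ t₁ s₂ t₂) u).det =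
      Real.exp (∑ i, s₁ u.2 i) * Real.exp (∑ j, s₂ (couplingForward s₁ t₁ s₂ t₂ u).1 j) ∧
    0 < (fderiv ℝ (couplingForward s₁ t₁ s₂ t₂) u).det := by
  set v₁ : Fin k → ℝ := fun i => u.1 i * Real.exp (s₁ u.2 i) + t₁ u.2 i with hv₁
  set LH := ((diagCLM (fun i => Real.exp (s₁ u.2 i))).comp (fst ℝ (Fin k → ℝ) (Fin m → ℝ))
        + (offCLM u.1 (fun i => Real.exp (s₁ u.2 i)) (fderiv ℝ s₁ u.2) (fderiv ℝ t₁ u.2)).comp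
            (snd ℝ (Fin k → ℝ) (Fin m → ℝ))).prod (snd ℝ (Fin k → ℝ) (Fin m → ℝ)) with hLH
  have hH : HasFDerivAt (fun u : (Fin k → ℝ) × (Fin m → ℝ) =>
      ((fun i => u.1 i * Real.exp (s₁ u.2 i) + t₁ u.2 i : Fin k → ℝ), u.2)) LH u :=
    (hasFDerivAt_v1 s₁ t₁ hs₁ ht₁ u).prodMk hasFDerivAt_snd
  set p : (Fin k → ℝ) × (Fin m → ℝ) := (v₁, u.2) with hp
  set LG := (fst ℝ (Fin k → ℝ) (Fin m → ℝ)).prod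
      ((offCLM p.2 (fun j => Real.exp (s₂ p.1 j)) (fderiv ℝ s₂ p.1) (fderiv ℝ t₂ p.1)).comp
          (fst ℝ (Fin k → ℝ) (Fin m → ℝ))
        + (diagCLM (fun j => Real.exp (s₂ p.1 j))).comp (snd ℝ (Fin k → ℝ) (Fin m → ℝ))) with hLG
  have hG : HasFDerivAt (fun p : (Fin k → ℝ) × (Fin m → ℝ) =>
      (p.1, (fun j => p.2 j * Real.exp (s₂ p.1 j) + t₂ p.1 j : Fin m → ℝ))) LG p :=
    hasFDerivAt_fst.prodMk (hasFDerivAt_v2 s₂ t₂ hs₂ ht₂ p)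
  have hF : HasFDerivAt (couplingForward s₁ t₁ s₂ t₂) (LG.comp LH) u := by
    refine (hG.comp u hH).congr_of_eventuallyEq (Filter.Eventually.of_forall fun x => ?_)
    rfl
  have hfd : fderiv ℝ (couplingForward s₁ t₁ s₂ t₂) u = LG.comp LH := hF.fderiv
  have hdetcomp : (LG.comp LH).det = LG.det * LH.det := by
    simp only [ContinuousLinearMap.det, ContinuousLinearMap.coe_comp, ← Module.End.mul_eq_comp,
      map_mul]
    exact LinearMap.det_comp _ _
  have hLHdet : LH.det = Real.exp (∑ i, s₁ u.2 i) := by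
    rw [hLH, det_block_upper, det_diagCLM_exp]
  have hLGdet : LG.det = Real.exp (∑ j, s₂ v₁ j) := by
    rw [hLG, det_block_lower, det_diagCLM_exp]
  have hfirst : (couplingForward s₁ t₁ s₂ t₂ u).1 = v₁ := rfl
  refine ⟨hF.differentiableAt, ?_, ?_⟩
  · rw [hfd, hdetcomp, hLHdet, hLGdet, hfirst, mul_comm]
  · rw [hfd, hdetcomp, hLHdet, hLGdet]
    positivity
end

section
/- Uniformity of the simulation-based calibration rank statistic: let X₀, X₁, …, X_L be independent real-valued random variables with the same distribution ν, where ν has no atoms. Define the rank statistic r = #{l ∈ {1, …, L} : X_l < X₀}. Then r is uniformly distributed on {0, 1, …, L}: for every k ∈ {0, 1, …, L}, P(r = k) = 1/(L+1). -/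
open MeasureTheory ProbabilityTheory
open scoped ENNReal Classical

noncomputable def sbcRank {n : ℕ} (x : Fin n → ℝ) (i : Fin n) : ℕ :=
  (Finset.univ.filter fun l => x l < x i).card

lemma sbcRank_lt {L : ℕ} (x : Fin (L + 1) → ℝ) (i : Fin (L + 1)) :
    sbcRank x i < L + 1 := by
  have hsub : (Finset.univ.filter fun l => x l < x i) ⊆ Finset.univ.erase i := by
    intro l hl
    simp only [Finset.mem_filter] at hl
    refine Finset.mem_erase.2 ⟨fun h => ?_, Finset.mem_univ _⟩
    exact absurd (h ▸ hl.2) (lt_irrefl _)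
  have := Finset.card_le_card hsub
  have h2 : (Finset.univ.erase i).card = L := by
    rw [Finset.card_erase_of_mem (Finset.mem_univ _), Finset.card_univ, Fintype.card_fin]
    omega
  rw [h2] at this
  simpa [sbcRank, Nat.lt_succ_iff] using this

lemma sbcRank_injective {L : ℕ} {x : Fin (L + 1) → ℝ} (hx : Function.Injective x) :
    Function.Injective (sbcRank x) := by
  intro a b hab
  by_contra hne
  have hxne : x a ≠ x b := fun h => hne (hx h)
  wlog hlt : x a < x b generalizing a b
  · exact this hab.symm (Ne.symm hne) hxne.symm (lt_of_le_of_ne (not_lt.1 hlt) hxne.symm)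
  have hss : (Finset.univ.filter fun l => x l < x a) ⊂ Finset.univ.filter fun l => x l < x b := by
    refine Finset.ssubset_iff_of_subset (fun l hl => ?_) |>.2 ⟨a, ?_, ?_⟩
    · simp only [Finset.mem_filter] at hl ⊢
      exact ⟨hl.1, hl.2.trans hlt⟩
    · simp [hlt]
    · simp
  exact absurd hab (Nat.ne_of_lt (Finset.card_lt_card hss))

lemma sbcRank_existsUnique {L : ℕ} {x : Fin (L + 1) → ℝ} (hx : Function.Injective x)
    (k : ℕ) (hk : k ≤ L) : ∃! i, sbcRank x i = k := by
  have hinj : Function.Injective (fun i => (⟨sbcRank x i, sbcRank_lt x i⟩ : Fin (L + 1))) := by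
    intro a b hab
    exact sbcRank_injective hx (congrArg Fin.val hab)
  have hsurj := Finite.injective_iff_surjective.1 hinj
  obtain ⟨i, hi⟩ := hsurj ⟨k, Nat.lt_succ_of_le hk⟩
  refine ⟨i, congrArg Fin.val hi, fun j hj => ?_⟩
  exact sbcRank_injective hx (hj.trans (congrArg Fin.val hi).symm)

lemma measurable_sbcRank {n : ℕ} (i : Fin n) : Measurable fun x : Fin n → ℝ => sbcRank x i := by
  have : (fun x : Fin n → ℝ => sbcRank x i)
      = fun x => ∑ l : Fin n, if x l < x i then 1 else 0 := by
    ext x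
    exact Finset.card_filter _ _
  rw [this]
  refine Finset.measurable_sum _ fun l _ => Measurable.ite ?_ measurable_const measurable_const
  exact measurableSet_lt (measurable_pi_apply l) (measurable_pi_apply i)

lemma sbcRank_comp_swap {L : ℕ} (x : Fin (L + 1) → ℝ) (i : Fin (L + 1)) :
    sbcRank (x ∘ (Equiv.swap (0 : Fin (L + 1)) i)) 0 = sbcRank x i := by
  unfold sbcRank
  have h0 : (x ∘ (Equiv.swap (0 : Fin (L + 1)) i)) 0 = x i := by
    simp [Equiv.swap_apply_left]
  rw [h0]
  refine Finset.card_bij' (fun l _ => Equiv.swap (0 : Fin (L + 1)) i l)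
    (fun m _ => Equiv.swap (0 : Fin (L + 1)) i m) ?_ ?_ ?_ ?_
  · intro a ha
    simp only [Finset.mem_filter, Function.comp_apply] at ha ⊢
    exact ⟨Finset.mem_univ _, ha.2⟩
  · intro b hb
    simp only [Finset.mem_filter, Function.comp_apply] at hb ⊢
    refine ⟨Finset.mem_univ _, ?_⟩
    rw [Equiv.swap_apply_self]
    exact hb.2
  · intro a _; exact Equiv.swap_apply_self _ _ _
  · intro b _; exact Equiv.swap_apply_self _ _ _

/-- **Uniformity of the simulation-based calibration rank statistic.** If
`X 0, X 1, …, X L` are i.i.d. real-valued random variables whose common law `ν` has no atoms,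
then the rank statistic `r ω = #{l ≠ 0 : X l ω < X 0 ω}` is uniformly distributed on
`{0, 1, …, L}`: for every `k ≤ L`, `P(r = k) = 1 / (L + 1)`. -/
theorem sbc_rank_statistic_uniform
    {Ω : Type*} [MeasurableSpace Ω] (P : Measure Ω) [IsProbabilityMeasure P]
    (L : ℕ) (X : Fin (L + 1) → Ω → ℝ)
    (hX_meas : ∀ l, Measurable (X l))
    (hX_indep : iIndepFun X P)
    (ν : Measure ℝ) (hX_law : ∀ l, P.map (X l) = ν)
    (hν_noatom : ∀ a : ℝ, ν {a} = 0)
    (r : Ω → ℕ)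
    (hr : ∀ ω, r ω = (Finset.univ.filter fun l : Fin (L + 1) => l ≠ 0 ∧ X l ω < X 0 ω).card)
    (k : ℕ) (hk : k ≤ L) :
    P {ω | r ω = k} = ((L : ℝ≥0∞) + 1)⁻¹ := by
  classical
  haveI hν_prob : IsProbabilityMeasure ν := by
    rw [← hX_law 0]; exact Measure.isProbabilityMeasure_map (hX_meas 0).aemeasurable
  set J : Ω → (Fin (L + 1) → ℝ) := fun ω l => X l ω with hJ_def
  have hJ_meas : Measurable J := measurable_pi_lambda _ hX_meas
  set μ : Measure (Fin (L + 1) → ℝ) := Measure.pi (fun _ => ν) with hμ_def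
  -- the joint law is the product measure
  have hJ_law : P.map J = μ := by
    refine (Measure.pi_eq fun s hs => ?_).symm
    rw [Measure.map_apply hJ_meas (MeasurableSet.univ_pi hs)]
    have hpre : J ⁻¹' Set.pi Set.univ s = ⋂ l ∈ Finset.univ, X l ⁻¹' s l := by
      ext ω
      simp [hJ_def, Set.mem_pi]
    rw [hpre, hX_indep.measure_inter_preimage_eq_mul Finset.univ (fun i _ => hs i)]
    refine Finset.prod_congr rfl fun i _ => ?_
    rw [← hX_law i, Measure.map_apply (hX_meas i) (hs i)]
  -- the diagonal is null
  have hdiagset : MeasurableSet {p : ℝ × ℝ | p.1 = p.2} :=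
    measurableSet_eq_fun measurable_fst measurable_snd
  have hdiag : (ν.prod ν) {p : ℝ × ℝ | p.1 = p.2} = 0 := by
    rw [Measure.prod_apply hdiagset]
    have h1 : ∀ a : ℝ, (Prod.mk a ⁻¹' {p : ℝ × ℝ | p.1 = p.2}) = {a} := by
      intro a; ext b; simp [eq_comm]
    simp only [h1, hν_noatom]
    simp
  have hpair : ∀ i j : Fin (L + 1), i ≠ j → μ {x | x i = x j} = 0 := by
    intro i j hij
    have hmsij : MeasurableSet {x : Fin (L + 1) → ℝ | x i = x j} :=
      measurableSet_eq_fun (measurable_pi_apply i) (measurable_pi_apply j)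
    rw [← hJ_law, Measure.map_apply hJ_meas hmsij]
    have hIndep : IndepFun (X i) (X j) P := hX_indep.indepFun hij
    have hmap : P.map (fun ω => (X i ω, X j ω)) = ν.prod ν := by
      rw [(indepFun_iff_map_prod_eq_prod_map_map (hX_meas i).aemeasurable
        (hX_meas j).aemeasurable).1 hIndep, hX_law i, hX_law j]
    have hpre2 : J ⁻¹' {x | x i = x j}
        = (fun ω => (X i ω, X j ω)) ⁻¹' {p : ℝ × ℝ | p.1 = p.2} := rfl
    rw [hpre2, ← Measure.map_apply ((hX_meas i).prodMk (hX_meas j)) hdiagset, hmap, hdiag]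
  -- the set of injective tuples has full measure
  set D : Set (Fin (L + 1) → ℝ) := {x | Function.Injective x} with hD_def
  have hD_meas : MeasurableSet D := by
    have hDeq : D = ⋂ i, ⋂ j, ⋂ (_ : i ≠ j), {x : Fin (L + 1) → ℝ | x i = x j}ᶜ := by
      ext x
      simp only [Set.mem_iInter, Set.mem_compl_iff, Set.mem_setOf_eq, hD_def]
      constructor
      · intro hx i j hij h; exact hij (hx h)
      · intro h a b hab; by_contra hne; exact h a b hne hab
    rw [hDeq]
    exact MeasurableSet.iInter fun i => MeasurableSet.iInter fun j =>
      MeasurableSet.iInter fun _ =>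
        (measurableSet_eq_fun (measurable_pi_apply i) (measurable_pi_apply j)).compl
  have hDc : μ Dᶜ = 0 := by
    have hsub : Dᶜ ⊆ ⋃ i, ⋃ j, ⋃ (_ : i ≠ j), {x : Fin (L + 1) → ℝ | x i = x j} := by
      intro x hx
      simp only [Set.mem_compl_iff, Set.mem_setOf_eq, hD_def, Function.Injective] at hx
      push_neg at hx
      obtain ⟨a, b, hab, hne⟩ := hx
      exact Set.mem_iUnion.2 ⟨a, Set.mem_iUnion.2 ⟨b, Set.mem_iUnion.2 ⟨hne, hab⟩⟩⟩
    exact measure_mono_null hsub (measure_iUnion_null fun i => measure_iUnion_null fun j =>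
      measure_iUnion_null fun hij => hpair i j hij)
  have hD_one : μ D = 1 := by
    have h := measure_add_measure_compl (μ := μ) hD_meas
    rw [hDc, add_zero] at h
    rw [h]; exact measure_univ
  -- the sets G i
  set G : Fin (L + 1) → Set (Fin (L + 1) → ℝ) :=
    fun i => D ∩ {x | sbcRank x i = k} with hG_def
  have hRank_meas : ∀ i : Fin (L + 1), MeasurableSet {x : Fin (L + 1) → ℝ | sbcRank x i = k} :=
    fun i => (measurable_sbcRank i) (measurableSet_singleton k)
  have hG_meas : ∀ i, MeasurableSet (G i) := fun i => hD_meas.inter (hRank_meas i)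
  have hG_disj : Pairwise (Function.onFun Disjoint G) := by
    intro i j hij
    rw [Function.onFun, Set.disjoint_left]
    rintro x ⟨hxD, hxi⟩ ⟨_, hxj⟩
    obtain ⟨m, _, hm⟩ := sbcRank_existsUnique hxD k hk
    exact hij ((hm i hxi).trans (hm j hxj).symm)
  have hG_union : (⋃ i, G i) = D := by
    ext x
    simp only [Set.mem_iUnion, hG_def, Set.mem_inter_iff, Set.mem_setOf_eq]
    constructor
    · rintro ⟨i, hi, _⟩; exact hi
    · intro hx
      obtain ⟨i, hi, _⟩ := sbcRank_existsUnique hx k hk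
      exact ⟨i, hx, hi⟩
  -- all G i have the same measure, by exchangeability
  have hG_eq : ∀ i, μ (G i) = μ (G 0) := by
    intro i
    rcases eq_or_ne i 0 with rfl | hi
    · rfl
    set σ := Equiv.swap (0 : Fin (L + 1)) i with hσ_def
    have hT := measurePreserving_piCongrLeft (fun _ : Fin (L + 1) => ν) σ
    set T := MeasurableEquiv.piCongrLeft (fun _ : Fin (L + 1) => ℝ) σ with hT_def
    have hTx : ∀ x : Fin (L + 1) → ℝ, T x = x ∘ σ := by
      intro x
      funext b
      have : T x (σ (σ.symm b)) = x (σ.symm b) := by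
        rw [hT_def, MeasurableEquiv.coe_piCongrLeft]
        exact Equiv.piCongrLeft_apply_apply (fun _ : Fin (L + 1) => ℝ) σ x (σ.symm b)
      rw [σ.apply_symm_apply] at this
      rw [this]
      simp [hσ_def, Equiv.symm_swap]
    have hpreT : T ⁻¹' (G 0) = G i := by
      ext x
      simp only [Set.mem_preimage, hG_def, Set.mem_inter_iff, Set.mem_setOf_eq, hD_def, hTx x]
      rw [Equiv.injective_comp, sbcRank_comp_swap]
    have := hT.measure_preimage (hG_meas 0).nullMeasurableSet
    rw [hpreT] at this
    exact this
  -- conclude that μ (G 0) = (L+1)⁻¹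
  have hsum : ∑ i : Fin (L + 1), μ (G i) = 1 := by
    rw [← tsum_fintype (L := SummationFilter.unconditional _), ← measure_iUnion hG_disj hG_meas, hG_union, hD_one]
  have hcard : ((L : ℝ≥0∞) + 1) * μ (G 0) = 1 := by
    calc ((L : ℝ≥0∞) + 1) * μ (G 0)
        = (Fintype.card (Fin (L + 1)) : ℝ≥0∞) * μ (G 0) := by
          rw [Fintype.card_fin]; push_cast; ring
      _ = ∑ _i : Fin (L + 1), μ (G 0) := by
          rw [Finset.sum_const, nsmul_eq_mul, Finset.card_univ]
      _ = ∑ i : Fin (L + 1), μ (G i) := Finset.sum_congr rfl fun i _ => (hG_eq i).symm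
      _ = 1 := hsum
  have hne0 : ((L : ℝ≥0∞) + 1) ≠ 0 := by simp
  have hnetop : ((L : ℝ≥0∞) + 1) ≠ ⊤ := by
    exact ENNReal.add_ne_top.2 ⟨ENNReal.natCast_ne_top L, ENNReal.one_ne_top⟩
  have hG0 : μ (G 0) = ((L : ℝ≥0∞) + 1)⁻¹ := by
    calc μ (G 0) = (((L : ℝ≥0∞) + 1)⁻¹ * ((L : ℝ≥0∞) + 1)) * μ (G 0) := by
          rw [ENNReal.inv_mul_cancel hne0 hnetop, one_mul]
      _ = ((L : ℝ≥0∞) + 1)⁻¹ * (((L : ℝ≥0∞) + 1) * μ (G 0)) := by rw [mul_assoc]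
      _ = ((L : ℝ≥0∞) + 1)⁻¹ := by rw [hcard, mul_one]
  -- transfer back to Ω
  have hset : {ω | r ω = k} = J ⁻¹' {x | sbcRank x 0 = k} := by
    ext ω
    simp only [Set.mem_setOf_eq, Set.mem_preimage, hr ω]
    have hfilter : (Finset.univ.filter fun l : Fin (L + 1) => l ≠ 0 ∧ X l ω < X 0 ω)
        = Finset.univ.filter fun l : Fin (L + 1) => X l ω < X 0 ω := by
      ext l
      simp only [Finset.mem_filter, Finset.mem_univ, true_and]
      constructor
      · exact fun h => h.2
      · intro h
        refine ⟨fun h0 => ?_, h⟩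
        rw [h0] at h
        exact lt_irrefl _ h
    rw [hfilter]
    rfl
  have hE : μ {x | sbcRank x 0 = k} = μ (G 0) := by
    refine le_antisymm ?_ (measure_mono Set.inter_subset_right)
    have hsub : {x : Fin (L + 1) → ℝ | sbcRank x 0 = k} ⊆ G 0 ∪ Dᶜ := by
      intro x hx
      by_cases hxD : x ∈ D
      · exact Or.inl ⟨hxD, hx⟩
      · exact Or.inr hxD
    calc μ {x | sbcRank x 0 = k} ≤ μ (G 0 ∪ Dᶜ) := measure_mono hsub
      _ ≤ μ (G 0) + μ Dᶜ := measure_union_le _ _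
      _ = μ (G 0) := by rw [hDc, add_zero]
  rw [hset, ← Measure.map_apply hJ_meas (hRank_meas 0), hJ_law, hE, hG0]
end
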